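/- Let m, n, k be positive integers with k ≤ n, let X ∈ M_m ⊗ M_n, and let X = ∑_{i=1}^r λ_i P_i be any decomposition with λ_i ∈ ℂ and each P_i ∈ M_m ⊗ M_n k-block positive. Then for all unit vectors v, w ∈ ℂ^m ⊗ ℂ^n with SR(v) ≤ k, SR(w) ≤ k, and (P ⊗ I_n) v = w for some P ∈ M_m, one has |⟨v, X w⟩| ≤ ‖∑_{i=1}^r |λ_i| P_i‖_or, where for Hermitian H the order norm is ‖H‖_or := inf{ t ≥ 0 : t I_{mn} + H and t I_{mn} − H are both k-block positive }. (This is the inequality ‖X‖_{M_m(OMIN^k(M_n))} ≤ ‖X‖_dec established in Proposition 5.3.) -/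

import Mathlib

open scoped ComplexOrder Kronecker
open Matrix

noncomputable section

/-- The standard inner product `⟨v, w⟩ = ∑ conj(vᵢ) wᵢ` on `I → ℂ`. -/
def inprod {I : Type*} [Fintype I] (v w : I → ℂ) : ℂ :=
  ∑ i, (starRingEnd ℂ) (v i) * w i

/-- `v` is a unit vector. -/
def UnitVec {I : Type*} [Fintype I] (v : I → ℂ) : Prop :=
  inprod v v = 1

/-- The Schmidt rank of a vector in `ℂ^I ⊗ ℂ^J`, i.e. the rank of the associated
`I × J` coefficient matrix. -/
noncomputable def SchmidtRank {I J : Type*} [Fintype I] [Fintype J] (v : I × J → ℂ) : ℕ :=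
  (Matrix.of fun i j => v (i, j)).rank

/-- The operator norm (largest singular value) of a matrix, as
`sup { |⟨v, A w⟩| : v, w unit vectors }`. -/
noncomputable def opNorm {I J : Type*} [Fintype I] [Fintype J] (A : Matrix I J ℂ) : ℝ :=
  sSup { t : ℝ | ∃ v w, UnitVec v ∧ UnitVec w ∧ t = ‖inprod v (A.mulVec w)‖ }

/-- The `S(k)`-norm of `X ∈ M_I ⊗ M_J`. -/
noncomputable def SNorm {I J : Type*} [Fintype I] [Fintype J] (k : ℕ)
    (X : Matrix (I × J) (I × J) ℂ) : ℝ :=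
  sSup { t : ℝ | ∃ v w : I × J → ℂ, UnitVec v ∧ UnitVec w ∧
    SchmidtRank v ≤ k ∧ SchmidtRank w ≤ k ∧
    t = ‖inprod v (X.mulVec w)‖ }

/-- `X` is a `k`-block positive (Hermitian) operator: `⟨v, X v⟩ ≥ 0` for every
vector of Schmidt rank at most `k`. -/
def kBlockPos {I J : Type*} [Fintype I] [Fintype J] (k : ℕ)
    (X : Matrix (I × J) (I × J) ℂ) : Prop :=
  X.IsHermitian ∧ ∀ v : I × J → ℂ, SchmidtRank v ≤ k → 0 ≤ inprod v (X.mulVec v)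

/-- `ρ` has Schmidt number at most `k` (in particular it is positive semidefinite):
it is a finite nonnegative combination of rank-one projections onto vectors of
Schmidt rank at most `k`. -/
def SchmidtNumberLE {I J : Type*} [Fintype I] [Fintype J] (k : ℕ)
    (ρ : Matrix (I × J) (I × J) ℂ) : Prop :=
  ∃ (N : ℕ) (c : Fin N → ℝ) (v : Fin N → (I × J → ℂ)),
    (∀ i, 0 ≤ c i) ∧ (∀ i, SchmidtRank (v i) ≤ k) ∧
    ρ = ∑ i, (c i : ℂ) • Matrix.vecMulVec (v i) (star (v i))

/-- `id_I ⊗ Φ` : the map applying `Φ` to the second tensor factor. -/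
noncomputable def tensorId {I : Type*} [Fintype I] {a b : ℕ}
    (Φ : Matrix (Fin a) (Fin a) ℂ →ₗ[ℂ] Matrix (Fin b) (Fin b) ℂ)
    (X : Matrix (I × Fin a) (I × Fin a) ℂ) : Matrix (I × Fin b) (I × Fin b) ℂ :=
  Matrix.of fun p q => Φ (Matrix.of fun s t => X (p.1, s) (q.1, t)) p.2 q.2

/-- The trace norm `‖X‖_tr = Tr √(X^* X)`. -/
noncomputable def trNorm {I : Type*} [Fintype I] [DecidableEq I] (X : Matrix I I ℂ) : ℝ :=
  ((Matrix.posSemidef_conjTranspose_mul_self X).1.eigenvectorUnitary.1 *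
    Matrix.diagonal (((↑) : ℝ → ℂ) ∘ Real.sqrt ∘ (Matrix.posSemidef_conjTranspose_mul_self X).1.eigenvalues) *
    (star (Matrix.posSemidef_conjTranspose_mul_self X).1.eigenvectorUnitary : Matrix I I ℂ)).trace.re

end

set_option linter.unusedSectionVars false
set_option linter.unusedVariables false

section helpers
variable {I : Type*} [Fintype I]

lemma ip_add_left (v v' w : I → ℂ) : inprod (v + v') w = inprod v w + inprod v' w := by
  simp [inprod, add_mul, Finset.sum_add_distrib]

lemma ip_smul_left (c : ℂ) (v w : I → ℂ) :
    inprod (c • v) w = (starRingEnd ℂ) c * inprod v w := by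
  simp [inprod, Finset.mul_sum, mul_assoc]

lemma ip_add_right (v w w' : I → ℂ) : inprod v (w + w') = inprod v w + inprod v w' := by
  simp [inprod, mul_add, Finset.sum_add_distrib]

lemma ip_smul_right (c : ℂ) (v w : I → ℂ) : inprod v (c • w) = c * inprod v w := by
  simp [inprod, Finset.mul_sum, mul_left_comm]

lemma ip_herm {A : Matrix I I ℂ} (hA : A.IsHermitian) (v w : I → ℂ) :
    (starRingEnd ℂ) (inprod v (A.mulVec w)) = inprod w (A.mulVec v) := by
  simp only [inprod, Matrix.mulVec, dotProduct, map_sum, Finset.mul_sum]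
  rw [Finset.sum_comm]
  refine Finset.sum_congr rfl fun j _ => Finset.sum_congr rfl fun i _ => ?_
  have h : (starRingEnd ℂ) (A i j) = A j i := by
    have := hA.apply i j; rw [← this]; simp
  calc (starRingEnd ℂ) ((starRingEnd ℂ) (v i) * (A i j * w j))
      = v i * ((starRingEnd ℂ) (A i j) * (starRingEnd ℂ) (w j)) := by
        simp [map_mul (starRingEnd ℂ)]
    _ = (starRingEnd ℂ) (w j) * (A j i * v i) := by rw [h]; ring

lemma ip_matrix_sum {I' : Type*} (s : Finset I') (f : I' → Matrix I I ℂ)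
    (v w : I → ℂ) :
    inprod v ((∑ i ∈ s, f i).mulVec w) = ∑ i ∈ s, inprod v ((f i).mulVec w) := by
  classical
  induction s using Finset.induction_on with
  | empty => simp [inprod, Matrix.mulVec, dotProduct]
  | insert a t h ih =>
      rw [Finset.sum_insert h, Finset.sum_insert h, Matrix.add_mulVec, ip_add_right, ih]

lemma ip_im_eq_zero {A : Matrix I I ℂ} (hA : A.IsHermitian) (u : I → ℂ) :
    (inprod u (A.mulVec u)).im = 0 := by
  have h := ip_herm hA u u
  have := Complex.conj_eq_iff_im.mp h
  exact this

end helpers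


section srlem
variable {m n : ℕ}

variable {m n : ℕ}

lemma coeff_kron_mulVec (Q : Matrix (Fin m) (Fin m) ℂ) (v : Fin m × Fin n → ℂ) :
    (Matrix.of fun i j => ((Q ⊗ₖ (1 : Matrix (Fin n) (Fin n) ℂ)).mulVec v) (i, j)) =
      Q * (Matrix.of fun i j => v (i, j)) := by
  ext i j
  simp only [Matrix.of_apply, Matrix.mulVec, dotProduct, Matrix.mul_apply,
    Fintype.sum_prod_type, Matrix.kroneckerMap_apply, Matrix.one_apply]
  refine Finset.sum_congr rfl fun a _ => ?_
  simp [Finset.mul_sum, mul_ite, ite_mul, Finset.sum_ite_eq' Finset.univ j]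

lemma sr_combo {Q : Matrix (Fin m) (Fin m) ℂ} {v w : Fin m × Fin n → ℂ}
    (hQ : (Q ⊗ₖ (1 : Matrix (Fin n) (Fin n) ℂ)).mulVec v = w) (β : ℂ) :
    SchmidtRank (v + β • w) ≤ SchmidtRank v := by
  have hM : (Matrix.of fun i j => (v + β • w) (i, j)) =
      ((1 : Matrix (Fin m) (Fin m) ℂ) + β • Q) * (Matrix.of fun i j => v (i, j)) := by
    rw [Matrix.add_mul, Matrix.one_mul, Matrix.smul_mul, ← coeff_kron_mulVec Q v, hQ]
    ext i j
    simp
  unfold SchmidtRank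
  rw [hM]
  exact Matrix.rank_mul_le_right _ _


end srlem

section cslem
variable {I J : Type*} [Fintype I] [Fintype J]

lemma cs_bound {k : ℕ} {P : Matrix (I × J) (I × J) ℂ} (hP : kBlockPos k P)
    {v w : I × J → ℂ} (hv : SchmidtRank v ≤ k) (hw : SchmidtRank w ≤ k)
    (hsum : ∀ β : ℂ, SchmidtRank (v + β • w) ≤ k) :
    ‖inprod v (P.mulVec w)‖ ≤
      ((inprod v (P.mulVec v)).re + (inprod w (P.mulVec w)).re) / 2 := by
  set a := inprod v (P.mulVec v) with ha_def
  set b := inprod w (P.mulVec w) with hb_def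
  set c := inprod v (P.mulVec w) with hc_def
  have ha : 0 ≤ a.re := by
    have := hP.2 v hv
    simpa using (Complex.le_def.mp this).1
  have hb : 0 ≤ b.re := by
    have := hP.2 w hw
    simpa using (Complex.le_def.mp this).1
  by_cases hc : c = 0
  · rw [hc]; simp; linarith
  · set r : ℝ := ‖c‖ with hr_def
    have hr : 0 < r := by
      simpa [hr_def] using (norm_pos_iff.mpr hc)
    have hrne : (r : ℂ) ≠ 0 := by exact_mod_cast hr.ne'
    set β : ℂ := -((starRingEnd ℂ) c) / r with hβ_def
    have hcc : c * (starRingEnd ℂ) c = (r : ℂ) ^ 2 := by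
      rw [Complex.mul_conj]
      norm_cast
      rw [← Complex.sq_norm]
    have hexp : inprod (v + β • w) (P.mulVec (v + β • w)) =
        a + β * c + (starRingEnd ℂ) β * (starRingEnd ℂ) c + ((starRingEnd ℂ) β * β) * b := by
      rw [Matrix.mulVec_add, Matrix.mulVec_smul, ip_add_left, ip_add_right, ip_add_right,
        ip_smul_left, ip_smul_left, ip_smul_right, ip_smul_right]
      have hwv : inprod w (P.mulVec v) = (starRingEnd ℂ) c := by
        rw [hc_def, ip_herm hP.1]
      rw [hwv, ← ha_def, ← hb_def, ← hc_def]
      ring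
    have hβconj : (starRingEnd ℂ) β = -c / r := by
      rw [hβ_def]
      simp [map_div₀, Complex.conj_ofReal]
    have h1 : β * c = -(r : ℂ) := by
      rw [hβ_def]
      field_simp
      linear_combination -hcc
    have h2 : (starRingEnd ℂ) β * (starRingEnd ℂ) c = -(r : ℂ) := by
      rw [hβconj]
      field_simp
      linear_combination -hcc
    have h3 : (starRingEnd ℂ) β * β = 1 := by
      rw [hβconj, hβ_def]
      field_simp
      linear_combination hcc
    have hval : a + β * c + (starRingEnd ℂ) β * (starRingEnd ℂ) c +
        ((starRingEnd ℂ) β * β) * b = a + b - 2 * (r : ℂ) := by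
      rw [h1, h2, h3]; ring
    have hq := hP.2 (v + β • w) (hsum β)
    rw [hexp, hval] at hq
    have hre := (Complex.le_def.mp hq).1
    simp only [Complex.add_re, Complex.sub_re, Complex.mul_re, Complex.ofReal_re,
      Complex.ofReal_im, Complex.zero_re] at hre
    have : r ≤ (a.re + b.re) / 2 := by
      norm_num at hre
      linarith
    simpa [hr_def] using this

end cslem

section helpers2b
variable {I : Type*} [Fintype I]

variable {I : Type*} [Fintype I]


lemma ip_sub_right (v w w' : I → ℂ) : inprod v (w - w') = inprod v w - inprod v w' := by
  simp [inprod, mul_sub, Finset.sum_sub_distrib]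

lemma ip_self_re (u : I → ℂ) : (inprod u u).re = ∑ i, Complex.normSq (u i) := by
  simp [inprod, Complex.normSq_apply, Complex.mul_re]

lemma ip_self_im (u : I → ℂ) : (inprod u u).im = 0 := by
  simp [inprod, Complex.mul_im]
  ring_nf
  simp [mul_comm]

lemma herm_real_smul (t : ℝ) {A : Matrix I I ℂ} (hA : A.IsHermitian) :
    ((t : ℂ) • A).IsHermitian := by
  unfold Matrix.IsHermitian at *
  rw [Matrix.conjTranspose_smul, hA]
  congr 1
  simp [Complex.star_def, Complex.conj_ofReal]

lemma herm_sum {I' : Type*} (s : Finset I') (f : I' → Matrix I I ℂ)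
    (hf : ∀ i ∈ s, (f i).IsHermitian) : (∑ i ∈ s, f i).IsHermitian := by
  unfold Matrix.IsHermitian at *
  rw [Matrix.conjTranspose_sum]
  exact Finset.sum_congr rfl hf

/-- Quadratic form bound: `|⟨u, S u⟩| ≤ (∑ |S p q|) * ⟨u,u⟩`. -/
lemma ip_quadform_bound (S : Matrix I I ℂ) (u : I → ℂ) :
    ‖inprod u (S.mulVec u)‖ ≤
      (∑ p, ∑ q, ‖S p q‖) * (inprod u u).re := by
  set E := (inprod u u).re with hE_def
  have hE : ∀ p, ‖u p‖ ^ 2 ≤ E := by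
    intro p
    rw [hE_def, ip_self_re, Complex.sq_norm]
    exact Finset.single_le_sum (fun i _ => Complex.normSq_nonneg (u i)) (Finset.mem_univ p)
  have key : ∀ p q, ‖u p‖ * ‖u q‖ ≤ E := by
    intro p q
    nlinarith [hE p, hE q, sq_nonneg (‖u p‖ - ‖u q‖),
      norm_nonneg (u p), norm_nonneg (u q)]
  have h1 : ‖inprod u (S.mulVec u)‖ ≤
      ∑ p, ∑ q, ‖u p‖ * (‖S p q‖ * ‖u q‖) := by
    unfold inprod Matrix.mulVec dotProduct
    refine le_trans (norm_sum_le _ _) (Finset.sum_le_sum fun p _ => ?_)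
    rw [norm_mul]
    simp only [Complex.norm_conj]
    refine le_trans (mul_le_mul_of_nonneg_left (norm_sum_le _ _)
      (norm_nonneg _)) ?_
    rw [Finset.mul_sum]
    exact Finset.sum_le_sum fun q _ => by
      rw [norm_mul]
  refine h1.trans ?_
  rw [Finset.sum_mul]
  refine Finset.sum_le_sum fun p _ => ?_
  rw [Finset.sum_mul]
  refine Finset.sum_le_sum fun q _ => ?_
  have := key p q
  have h2 : ‖u p‖ * (‖S p q‖ * ‖u q‖) =
      ‖S p q‖ * (‖u p‖ * ‖u q‖) := by ring
  rw [h2]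
  exact mul_le_mul_of_nonneg_left this (norm_nonneg _)


end helpers2b
/-- Proposition 5.3: the inequality `‖X‖_{M_m(OMIN^k(M_n))} ≤ ‖X‖_dec`. -/
theorem matrix_order_norm_le_dec (m n k N : ℕ) (hm : 0 < m) (hn : 0 < n)
    (hk : 0 < k) (hkn : k ≤ n)
    (X : Matrix (Fin m × Fin n) (Fin m × Fin n) ℂ)
    (lam : Fin N → ℂ) (P : Fin N → Matrix (Fin m × Fin n) (Fin m × Fin n) ℂ)
    (hP : ∀ i, kBlockPos k (P i)) (hdec : X = ∑ i, lam i • P i)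
    (v w : Fin m × Fin n → ℂ) (hv : UnitVec v) (hw : UnitVec w)
    (hvk : SchmidtRank v ≤ k) (hwk : SchmidtRank w ≤ k)
    (hrel : ∃ Q : Matrix (Fin m) (Fin m) ℂ,
      (Q ⊗ₖ (1 : Matrix (Fin n) (Fin n) ℂ)).mulVec v = w) :
    ‖inprod v (X.mulVec w)‖ ≤
      sInf { t : ℝ | 0 ≤ t ∧
        kBlockPos k ((t : ℂ) • (1 : Matrix (Fin m × Fin n) (Fin m × Fin n) ℂ) +
          ∑ i, (‖lam i‖ : ℂ) • P i) ∧
        kBlockPos k ((t : ℂ) • (1 : Matrix (Fin m × Fin n) (Fin m × Fin n) ℂ) -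
          ∑ i, (‖lam i‖ : ℂ) • P i) } := by
  set S : Matrix (Fin m × Fin n) (Fin m × Fin n) ℂ :=
    ∑ i, (‖lam i‖ : ℂ) • P i with hS_def
  have hSherm : S.IsHermitian :=
    herm_sum _ _ fun i _ => herm_real_smul _ (hP i).1
  -- expansion of the shifted quadratic forms
  have hshift : ∀ (t : ℝ) (u : Fin m × Fin n → ℂ),
      inprod u (((t : ℂ) • (1 : Matrix (Fin m × Fin n) (Fin m × Fin n) ℂ) + S).mulVec u) =
        (t : ℂ) * inprod u u + inprod u (S.mulVec u) := by
    intro t u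
    rw [Matrix.add_mulVec, ip_add_right, Matrix.smul_mulVec, ip_smul_right,
      Matrix.one_mulVec]
  have hshift' : ∀ (t : ℝ) (u : Fin m × Fin n → ℂ),
      inprod u (((t : ℂ) • (1 : Matrix (Fin m × Fin n) (Fin m × Fin n) ℂ) - S).mulVec u) =
        (t : ℂ) * inprod u u - inprod u (S.mulVec u) := by
    intro t u
    rw [Matrix.sub_mulVec, ip_sub_right, Matrix.smul_mulVec, ip_smul_right,
      Matrix.one_mulVec]
  -- nonemptiness witness
  set t₀ : ℝ := ∑ p, ∑ q, ‖S p q‖ with ht₀_def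
  have ht₀0 : 0 ≤ t₀ :=
    Finset.sum_nonneg fun p _ => Finset.sum_nonneg fun q _ => norm_nonneg _
  have hpos : ∀ (s : ℝ) (u : Fin m × Fin n → ℂ),
      (s = 1 ∨ s = -1) → 0 ≤ (t₀ : ℂ) * inprod u u + (s : ℂ) * inprod u (S.mulVec u) := by
    intro s u hs
    rw [Complex.le_def]
    constructor
    · simp only [Complex.add_re, Complex.mul_re, Complex.ofReal_re, Complex.ofReal_im,
        Complex.zero_re, zero_mul, sub_zero]
      have h1 := ip_quadform_bound S u
      have h2 : |(inprod u (S.mulVec u)).re| ≤ ‖inprod u (S.mulVec u)‖ :=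
        Complex.abs_re_le_norm _
      have hs1 : |s| = 1 := by rcases hs with h | h <;> simp [h]
      have := abs_le.mp (h2.trans h1)
      rcases hs with h | h <;> simp [h] <;> nlinarith [this.1, this.2]
    · simp only [Complex.add_im, Complex.mul_im, Complex.ofReal_re, Complex.ofReal_im,
        Complex.zero_im, zero_mul, add_zero]
      rw [ip_self_im, ip_im_eq_zero hSherm]
      rcases hs with h | h <;> simp [h]
  have hmem : t₀ ∈ { t : ℝ | 0 ≤ t ∧
      kBlockPos k ((t : ℂ) • (1 : Matrix (Fin m × Fin n) (Fin m × Fin n) ℂ) + S) ∧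
      kBlockPos k ((t : ℂ) • (1 : Matrix (Fin m × Fin n) (Fin m × Fin n) ℂ) - S) } := by
    refine ⟨ht₀0, ⟨(herm_real_smul t₀ Matrix.isHermitian_one).add hSherm, fun u _ => ?_⟩,
      ⟨(herm_real_smul t₀ Matrix.isHermitian_one).sub hSherm, fun u _ => ?_⟩⟩
    · rw [hshift]
      have := hpos 1 u (Or.inl rfl)
      simpa using this
    · rw [hshift']
      have := hpos (-1) u (Or.inr rfl)
      push_cast at this
      rw [neg_one_mul] at this
      simpa [sub_eq_add_neg] using this
  -- main bound
  refine le_csInf ⟨t₀, hmem⟩ ?_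
  rintro t ⟨ht0, hplus, hminus⟩
  obtain ⟨Q, hQ⟩ := hrel
  have hsum : ∀ β : ℂ, SchmidtRank (v + β • w) ≤ k :=
    fun β => (sr_combo hQ β).trans hvk
  -- bounds from k-block positivity of t•1 - S
  have hbv : (inprod v (S.mulVec v)).re ≤ t := by
    have h := hminus.2 v hvk
    rw [hshift', hv] at h
    have := (Complex.le_def.mp h).1
    simp only [Complex.sub_re, Complex.mul_re, Complex.ofReal_re, Complex.ofReal_im,
      Complex.one_re, Complex.one_im, Complex.zero_re] at this
    linarith
  have hbw : (inprod w (S.mulVec w)).re ≤ t := by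
    have h := hminus.2 w hwk
    rw [hshift', hw] at h
    have := (Complex.le_def.mp h).1
    simp only [Complex.sub_re, Complex.mul_re, Complex.ofReal_re, Complex.ofReal_im,
      Complex.one_re, Complex.one_im, Complex.zero_re] at this
    linarith
  -- expand X
  have hX : inprod v (X.mulVec w) = ∑ i, lam i * inprod v ((P i).mulVec w) := by
    rw [hdec, ip_matrix_sum]
    exact Finset.sum_congr rfl fun i _ => by
      rw [Matrix.smul_mulVec, ip_smul_right]
  have hSv : (inprod v (S.mulVec v)).re = ∑ i, ‖lam i‖ *
      (inprod v ((P i).mulVec v)).re := by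
    rw [hS_def, ip_matrix_sum, Complex.re_sum]
    exact Finset.sum_congr rfl fun i _ => by
      rw [Matrix.smul_mulVec, ip_smul_right]
      simp [Complex.mul_re]
  have hSw : (inprod w (S.mulVec w)).re = ∑ i, ‖lam i‖ *
      (inprod w ((P i).mulVec w)).re := by
    rw [hS_def, ip_matrix_sum, Complex.re_sum]
    exact Finset.sum_congr rfl fun i _ => by
      rw [Matrix.smul_mulVec, ip_smul_right]
      simp [Complex.mul_re]
  calc ‖inprod v (X.mulVec w)‖
      ≤ ∑ i, ‖lam i‖ * ‖inprod v ((P i).mulVec w)‖ := by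
        rw [hX]
        refine le_trans (norm_sum_le _ _) (Finset.sum_le_sum fun i _ => ?_)
        rw [norm_mul]
    _ ≤ ∑ i, ‖lam i‖ *
          (((inprod v ((P i).mulVec v)).re + (inprod w ((P i).mulVec w)).re) / 2) := by
        refine Finset.sum_le_sum fun i _ => ?_
        exact mul_le_mul_of_nonneg_left (cs_bound (hP i) hvk hwk hsum) (norm_nonneg _)
    _ = ((inprod v (S.mulVec v)).re + (inprod w (S.mulVec w)).re) / 2 := by
        rw [hSv, hSw, ← Finset.sum_add_distrib, Finset.sum_div]
        exact Finset.sum_congr rfl fun i _ => by ring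
    _ ≤ t := by linarith
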